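/- Let `t` be a valid Patricia trie in which every leaf label has length `ℓ`, and `v_i : List Bool` with `|v_i| = ℓ`. Let `π` be a position with `subtreeAt t π = some g`, where `g = node s g₀ g₁`, and suppose for some bit `b` that `g_b = node s' d₀ d₁`, where for some bit `b'` the child `d_{b'}` equals `leaf v_d`. Write `ns` for the other child of `g_b` and `ps` for the other child of `g`. Assume `s` is not a prefix of `v_i`, and that whenever `π = π₀ ++ [i]` is nonempty with `subtreeAt t π₀ = some (node s₀ l₀ r₀)`, the string `s₀ ++ [i]` is a prefix of `v_i`. Then: neither of `lbl ns`, `lbl ps` is a prefix of the other; the longest common prefix of `lbl ns` and `lbl ps` equals `s`; the trie `replaceAt t π (join (join ns ps) (leaf v_i))` is valid; and its set of leaf labels equals `(leafLabels t \ {v_d}) ∪ {v_i}`. (Special case 4 of the paper's replace operation: Case 6 of Invariant 1 and Case 3 of Lemma `successful-special-mov-lem`.) -/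

import Mathlib

inductive PTrie : Type
  | leaf (s : List Bool) : PTrie
  | node (s : List Bool) (l r : PTrie) : PTrie

/-- Label at the root of a trie. -/
def lbl : PTrie → List Bool
  | .leaf s => s
  | .node s _ _ => s

/-- A trie is valid if for every internal node `node s l r`,
`s ++ [false]` is a prefix of `lbl l` and `s ++ [true]` is a prefix of `lbl r`. -/
def Valid : PTrie → Prop
  | .leaf _ => True
  | .node s l r => ((s ++ [false]) <+: lbl l) ∧ ((s ++ [true]) <+: lbl r) ∧ Valid l ∧ Valid r

/-- Subtree at a position: descend left on `false`, right on `true`. -/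
def subtreeAt : PTrie → List Bool → Option PTrie
  | t, [] => some t
  | .leaf _, _ :: _ => none
  | .node _ l r, b :: π => subtreeAt (if b then r else l) π

/-- Set of binary strings appearing at the leaves. -/
def leafLabels : PTrie → Set (List Bool)
  | .leaf s => {s}
  | .node _ l r => leafLabels l ∪ leafLabels r

/-- Sequential search. -/
def search (v : List Bool) : PTrie → PTrie
  | .leaf s => .leaf s
  | .node s l r =>
    if s <+: v ∧ s ≠ v then
      (if v.getD s.length false then search v r else search v l)
    else .node s l r

/-- Position of the node returned by `search`. -/
def searchPos (v : List Bool) : PTrie → List Bool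
  | .leaf _ => []
  | .node s l r =>
    if s <+: v ∧ s ≠ v then
      (if v.getD s.length false then true :: searchPos v r else false :: searchPos v l)
    else []

/-- Replace the subtree at a position. -/
def replaceAt : PTrie → List Bool → PTrie → PTrie
  | _, [], u => u
  | .leaf s, _ :: _, _ => .leaf s
  | .node s l r, b :: π, u =>
    if b then .node s l (replaceAt r π u) else .node s (replaceAt l π u) r

/-- Longest common prefix of two binary strings. -/
def lcp : List Bool → List Bool → List Bool
  | a :: as, b :: bs => if a = b then a :: lcp as bs else []
  | _, _ => []

/-- Join two tries under a new internal node labelled by the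
longest common prefix of their labels. -/
def join (t₁ t₂ : PTrie) : PTrie :=
  if (lbl t₁).getD (lcp (lbl t₁) (lbl t₂)).length true then
    .node (lcp (lbl t₁) (lbl t₂)) t₂ t₁
  else
    .node (lcp (lbl t₁) (lbl t₂)) t₁ t₂

/-- Sequential insert. -/
def insertT (v : List Bool) : PTrie → PTrie
  | .node s l r =>
    if s <+: v ∧ s ≠ v then
      (if v.getD s.length false then .node s l (insertT v r) else .node s (insertT v l) r)
    else join (.node s l r) (.leaf v)
  | .leaf s => join (.leaf s) (.leaf v)

-- helpers

lemma lcp_append_cons (p : List Bool) (x y : Bool) (u v : List Bool) (h : x ≠ y) :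
    lcp (p ++ x :: u) (p ++ y :: v) = p := by
  induction p with
  | nil => simp [lcp, h]
  | cons a q ih => simp [lcp, ih]

lemma prefix_lcp {q a b : List Bool} (ha : q <+: a) (hb : q <+: b) : q <+: lcp a b := by
  induction q generalizing a b with
  | nil => exact List.nil_prefix
  | cons x q ih =>
    obtain ⟨u, rfl⟩ := ha; obtain ⟨v, rfl⟩ := hb
    simp only [List.cons_append, lcp, if_pos rfl]
    exact (List.cons_prefix_cons).2 ⟨rfl, ih (q.prefix_append u) (q.prefix_append v)⟩

lemma not_prefix_of_cons_diff (p : List Bool) {x y : Bool} (u v : List Bool) (h : x ≠ y) :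
    ¬ (p ++ x :: u <+: p ++ y :: v) := by
  intro hp
  rw [List.prefix_append_right_inj] at hp
  exact h (List.cons_prefix_cons.1 hp).1

lemma getD_append_cons (p : List Bool) (x : Bool) (u : List Bool) (d : Bool) :
    (p ++ x :: u).getD p.length d = x := by
  induction p with
  | nil => simp [List.getD]
  | cons a q ih => simpa [List.getD] using ih

lemma subtreeAt_append (t : PTrie) (π₁ π₂ : List Bool) :
    subtreeAt t (π₁ ++ π₂) = (subtreeAt t π₁).bind (fun u => subtreeAt u π₂) := by
  induction π₁ generalizing t with
  | nil => simp [subtreeAt]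
  | cons b π ih =>
    cases t with
    | leaf s => simp [subtreeAt]
    | node s l r => simp [subtreeAt, ih]

lemma lbl_prefix_leaf {t : PTrie} (hv : Valid t) {w : List Bool} (hw : w ∈ leafLabels t) :
    lbl t <+: w := by
  induction t with
  | leaf s => simp [leafLabels] at hw; subst hw; exact List.prefix_rfl
  | node s l r ihl ihr =>
    obtain ⟨h1, h2, h3, h4⟩ := hv
    simp only [leafLabels, Set.mem_union] at hw
    rcases hw with hw | hw
    · exact ((s.prefix_append [false]).trans h1).trans (ihl h3 hw)
    · exact ((s.prefix_append [true]).trans h2).trans (ihr h4 hw)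

lemma subtreeAt_spec {t u : PTrie} {π : List Bool} (hv : Valid t)
    (h : subtreeAt t π = some u) :
    Valid u ∧ lbl t <+: lbl u ∧ leafLabels u ⊆ leafLabels t := by
  induction π generalizing t with
  | nil =>
    simp [subtreeAt] at h; subst h; exact ⟨hv, List.prefix_rfl, subset_rfl⟩
  | cons b π ih =>
    cases t with
    | leaf s => simp [subtreeAt] at h
    | node s l r =>
      obtain ⟨h1, h2, h3, h4⟩ := hv
      simp only [subtreeAt] at h
      cases b with
      | false =>
        simp only [if_neg Bool.false_ne_true] at h
        obtain ⟨hva, hpb, hss⟩ := ih h3 h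
        refine ⟨hva, ((s.prefix_append [false]).trans h1).trans hpb, hss.trans ?_⟩
        simp only [leafLabels]; exact Set.subset_union_left
      | true =>
        simp only [if_pos rfl] at h
        obtain ⟨hva, hpb, hss⟩ := ih h4 h
        refine ⟨hva, ((s.prefix_append [true]).trans h2).trans hpb, hss.trans ?_⟩
        simp only [leafLabels]; exact Set.subset_union_right

lemma lbl_replaceAt (t : PTrie) (b : Bool) (π : List Bool) (u' : PTrie) :
    lbl (replaceAt t (b :: π) u') = lbl t := by
  cases t <;> cases b <;> simp [replaceAt, lbl]

lemma valid_replaceAt {t g : PTrie} {π : List Bool} (hv : Valid t)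
    (hsub : subtreeAt t π = some g) {u' : PTrie} (hvu : Valid u')
    (hpre : ∀ π₀ i, π₀ ++ [i] <+: π → ∀ s₀ l₀ r₀,
        subtreeAt t π₀ = some (PTrie.node s₀ l₀ r₀) → s₀ ++ [i] <+: lbl u') :
    Valid (replaceAt t π u') := by
  induction π generalizing t with
  | nil => simpa [replaceAt]
  | cons b π ih =>
    cases t with
    | leaf s => simp [subtreeAt] at hsub
    | node s l r =>
      obtain ⟨h1, h2, h3, h4⟩ := hv
      simp only [subtreeAt] at hsub
      have hlbl : ∀ (c : PTrie), lbl (replaceAt c π u') = if π = [] then lbl u' else lbl c := by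
        intro c
        cases π with
        | nil => simp [replaceAt]
        | cons b2 π2 => simp [lbl_replaceAt]
      have hstep : ∀ (c : PTrie) (hb : subtreeAt c π = some g) (hvc : Valid c)
          (hpc : s ++ [b] <+: lbl c) (hcb : c = if b then r else l),
          (s ++ [b] <+: lbl (replaceAt c π u')) ∧
          Valid (replaceAt c π u') := by
        intro c hb hvc hpc hcb
        constructor
        · rw [hlbl]
          split
          · next hπ =>
            subst hπ
            exact hpre [] b (by simp) s l r rfl
          · exact hpc
        · refine ih hvc hb ?_
          intro π₀ i hpi s₀ l₀ r₀ hs₀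
          refine hpre (b :: π₀) i ?_ s₀ l₀ r₀ ?_
          · obtain ⟨ρ, hρ⟩ := hpi
            exact ⟨ρ, by simp [← hρ]⟩
          · simp only [subtreeAt, ← hcb]
            exact hs₀
      cases b with
      | false =>
        simp only [if_neg Bool.false_ne_true] at hsub
        obtain ⟨hpre', hvrep⟩ := hstep l hsub h3 h1 (by simp)
        simp only [replaceAt, if_neg Bool.false_ne_true, Valid]
        exact ⟨hpre', h2, hvrep, h4⟩
      | true =>
        simp only [if_pos rfl] at hsub
        obtain ⟨hpre', hvrep⟩ := hstep r hsub h4 h2 (by simp)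
        simp only [replaceAt, if_pos rfl, Valid]
        exact ⟨h1, hpre', h3, hvrep⟩

lemma prefix_false_true_disj {s w : List Bool} (h1 : s ++ [false] <+: w)
    (h2 : s ++ [true] <+: w) : False := by
  have hle : (s ++ [false]).length ≤ (s ++ [true]).length := by simp
  have := (List.prefix_of_prefix_length_le h1 h2 hle).eq_of_length (by simp)
  simpa using this

lemma leafLabels_replaceAt {t g : PTrie} {π : List Bool} (hv : Valid t)
    (hsub : subtreeAt t π = some g) (u' : PTrie) :
    leafLabels (replaceAt t π u') = (leafLabels t \ leafLabels g) ∪ leafLabels u' := by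
  induction π generalizing t with
  | nil =>
    simp [subtreeAt] at hsub; subst hsub; simp [replaceAt]
  | cons b π ih =>
    cases t with
    | leaf s => simp [subtreeAt] at hsub
    | node s l r =>
      obtain ⟨h1, h2, h3, h4⟩ := hv
      simp only [subtreeAt] at hsub
      have hdisj : ∀ w, w ∈ leafLabels l → w ∈ leafLabels r → False := by
        intro w hwl hwr
        exact prefix_false_true_disj (h1.trans (lbl_prefix_leaf h3 hwl))
          (h2.trans (lbl_prefix_leaf h4 hwr))
      cases b with
      | false =>
        simp only [if_neg Bool.false_ne_true] at hsub
        have hg : leafLabels g ⊆ leafLabels l := (subtreeAt_spec h3 hsub).2.2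
        simp only [replaceAt, if_neg Bool.false_ne_true, leafLabels, ih h3 hsub]
        ext w
        have h5 := hdisj w
        have h6 := @hg w
        simp only [Set.mem_union, Set.mem_diff]
        tauto
      | true =>
        simp only [if_pos rfl] at hsub
        have hg : leafLabels g ⊆ leafLabels r := (subtreeAt_spec h4 hsub).2.2
        simp only [replaceAt, if_pos rfl, ↓reduceIte, leafLabels, ih h4 hsub]
        ext w
        have h5 := hdisj w
        have h6 := @hg w
        simp only [Set.mem_union, Set.mem_diff]
        tauto

lemma lcp_spec {a c : List Bool} (ha : ¬ a <+: c) (hb : ¬ c <+: a) :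
    ∃ p x u v, a = p ++ x :: u ∧ c = p ++ (!x) :: v ∧ lcp a c = p := by
  induction a generalizing c with
  | nil => exact absurd (List.nil_prefix) ha
  | cons x as ih =>
    cases c with
    | nil => exact absurd (List.nil_prefix) hb
    | cons y bs =>
      by_cases hxy : x = y
      · subst hxy
        have ha' : ¬ as <+: bs := fun h => ha (List.cons_prefix_cons.2 ⟨rfl, h⟩)
        have hb' : ¬ bs <+: as := fun h => hb (List.cons_prefix_cons.2 ⟨rfl, h⟩)
        obtain ⟨p, z, u, v, e1, e2, e3⟩ := ih ha' hb'
        exact ⟨x :: p, z, u, v, by simp [e1], by simp [e2], by simp [lcp, e3]⟩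
      · have hy : y = !x := by cases x <;> cases y <;> simp_all
        exact ⟨[], x, as, bs, rfl, by simp [hy], by simp [lcp, hxy]⟩

lemma prefix_bool_disj {q w : List Bool} (x : Bool) (h1 : q ++ [x] <+: w)
    (h2 : q ++ [!x] <+: w) : False := by
  cases x
  · exact prefix_false_true_disj h1 (by simpa using h2)
  · exact prefix_false_true_disj (by simpa using h2) h1

lemma join_eq (t₁ t₂ : PTrie) : join t₁ t₂ =
    (if (lbl t₁).getD (lcp (lbl t₁) (lbl t₂)).length true then
      PTrie.node (lcp (lbl t₁) (lbl t₂)) t₂ t₁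
    else
      PTrie.node (lcp (lbl t₁) (lbl t₂)) t₁ t₂) := rfl

lemma core {t : PTrie} {ℓ : ℕ} (hv : Valid t)
    (hleaf : ∀ w ∈ leafLabels t, w.length = ℓ)
    {vi : List Bool} (hvi : vi.length = ℓ)
    {π s s' : List Bool} {g : PTrie} {ns ps : PTrie} {b b' : Bool} {vd : List Bool}
    (hsub : subtreeAt t π = some g)
    (hlblg : lbl g = s)
    (hLg : leafLabels g = leafLabels ns ∪ leafLabels ps ∪ {vd})
    (h1 : s ++ [b] <+: s')
    (h2 : s ++ [!b] <+: lbl ps) (hvps : Valid ps)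
    (h3 : s' ++ [b'] <+: vd)
    (h4 : s' ++ [!b'] <+: lbl ns) (hvns : Valid ns)
    (hnp : ¬ (s <+: vi))
    (hparent : ∀ (π₀ : List Bool) (i : Bool) (s₀ : List Bool) (l₀ r₀ : PTrie),
        π = π₀ ++ [i] → subtreeAt t π₀ = some (PTrie.node s₀ l₀ r₀) →
        (s₀ ++ [i]) <+: vi) :
    ¬ (lbl ns <+: lbl ps) ∧ ¬ (lbl ps <+: lbl ns) ∧
    lcp (lbl ns) (lbl ps) = s ∧
    Valid (replaceAt t π (join (join ns ps) (PTrie.leaf vi))) ∧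
    leafLabels (replaceAt t π (join (join ns ps) (PTrie.leaf vi))) =
      (leafLabels t \ {vd}) ∪ {vi} := by
  obtain ⟨hvg, hpg, hsg⟩ := subtreeAt_spec hv hsub
  have hs'ns : s' <+: lbl ns := (s'.prefix_append _).trans h4
  have hns_s : s ++ [b] <+: lbl ns := h1.trans hs'ns
  obtain ⟨u1, hu1⟩ := hns_s
  have h2' := h2
  obtain ⟨u2, hu2⟩ := h2'
  rw [List.append_assoc, List.singleton_append] at hu1 hu2
  have hbne : b ≠ !b := by simp
  have claim1 : ¬ lbl ns <+: lbl ps := by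
    rw [← hu1, ← hu2]; exact not_prefix_of_cons_diff s u1 u2 hbne
  have claim2 : ¬ lbl ps <+: lbl ns := by
    rw [← hu1, ← hu2]; exact not_prefix_of_cons_diff s u2 u1 (by simp)
  have hlcp1 : lcp (lbl ns) (lbl ps) = s := by
    rw [← hu1, ← hu2]; exact lcp_append_cons s b (!b) u1 u2 hbne
  -- join ns ps
  have hcond : (lbl ns).getD (lcp (lbl ns) (lbl ps)).length true = b := by
    rw [hlcp1, ← hu1]; exact getD_append_cons s b u1 true
  have hJ : join ns ps = if b then PTrie.node s ps ns else PTrie.node s ns ps := by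
    rw [join_eq ns ps, hcond, hlcp1]
  have hvJ : Valid (join ns ps) := by
    rw [hJ]; cases b with
    | true => exact ⟨by simpa using h2, ⟨u1, by simpa using hu1⟩, hvps, hvns⟩
    | false => exact ⟨⟨u1, by simpa using hu1⟩, by simpa using h2, hvns, hvps⟩
  have hlblJ : lbl (join ns ps) = s := by rw [hJ]; cases b <;> simp [lbl]
  have hLJ : leafLabels (join ns ps) = leafLabels ns ∪ leafLabels ps := by
    rw [hJ]; cases b <;> simp [leafLabels, Set.union_comm]
  -- lengths
  have hvdg : vd ∈ leafLabels g := by rw [hLg]; simp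
  have hlvd : vd.length = ℓ := hleaf vd (hsg hvdg)
  have hls : s.length + 2 ≤ ℓ := by
    have a1 := h1.length_le
    have a2 := h3.length_le
    simp at a1 a2
    omega
  have hnvs : ¬ vi <+: s := by
    intro h
    have := h.length_le
    omega
  obtain ⟨p, x, u, v, hsx, hvix, hlcp2⟩ := lcp_spec hnp hnvs
  -- join J (leaf vi)
  have hlcpJ : lcp (lbl (join ns ps)) (lbl (PTrie.leaf vi)) = p := by
    rw [hlblJ]
    show lcp s vi = p
    exact hlcp2
  have hcond2 : (lbl (join ns ps)).getD
      (lcp (lbl (join ns ps)) (lbl (PTrie.leaf vi))).length true = x := by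
    rw [hlcpJ, hlblJ, hsx]
    exact getD_append_cons p x u true
  have hJ2 : join (join ns ps) (.leaf vi)
      = if x then PTrie.node p (.leaf vi) (join ns ps)
        else PTrie.node p (join ns ps) (.leaf vi) := by
    rw [join_eq (join ns ps) (.leaf vi), hcond2, hlcpJ]
  have hvJ2 : Valid (join (join ns ps) (.leaf vi)) := by
    rw [hJ2]; cases x with
    | true =>
      refine ⟨⟨v, ?_⟩, ?_, trivial, hvJ⟩
      · show p ++ [false] ++ v = vi
        simp [hvix]
      · rw [hlblJ, hsx]
        exact ⟨u, by simp⟩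
    | false =>
      refine ⟨?_, ⟨v, ?_⟩, hvJ, trivial⟩
      · rw [hlblJ, hsx]
        exact ⟨u, by simp⟩
      · show p ++ [true] ++ v = vi
        simp [hvix]
  have hlblJ2 : lbl (join (join ns ps) (.leaf vi)) = p := by
    rw [hJ2]; cases x <;> simp [lbl]
  have hLJ2 : leafLabels (join (join ns ps) (.leaf vi))
      = leafLabels ns ∪ leafLabels ps ∪ {vi} := by
    rw [hJ2]; cases x <;> simp [leafLabels, hLJ] <;> ext w <;>
      simp only [Set.mem_union, Set.mem_singleton_iff] <;> tauto
  -- validity of the replacement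
  have hvrep : Valid (replaceAt t π (join (join ns ps) (.leaf vi))) := by
    refine valid_replaceAt hv hsub hvJ2 ?_
    intro π₀ i hpi s₀ l₀ r₀ hs₀
    rw [hlblJ2, ← hlcp2]
    obtain ⟨ρ, hρ⟩ := hpi
    obtain ⟨hv0, hp0, -⟩ := subtreeAt_spec hv hs₀
    obtain ⟨e1, e2, hv0l, hv0r⟩ := hv0
    have hchild : subtreeAt t (π₀ ++ [i]) = some (if i then r₀ else l₀) := by
      rw [subtreeAt_append, hs₀]
      simp [subtreeAt]
    have hpc : s₀ ++ [i] <+: lbl (if i then r₀ else l₀) := by cases i <;> simpa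
    have hvchild : Valid (if i then r₀ else l₀) := by cases i <;> simpa
    have hrest : subtreeAt (if i then r₀ else l₀) ρ = some g := by
      have h := hsub
      rw [← hρ, subtreeAt_append, hchild] at h
      simpa using h
    rcases List.eq_nil_or_concat ρ with rfl | ⟨ρ', i', rfl⟩
    · simp [subtreeAt] at hrest
      have hvi' : s₀ ++ [i] <+: vi :=
        hparent π₀ i s₀ l₀ r₀ (by simpa using hρ.symm) hs₀
      have hss : s₀ ++ [i] <+: s := by
        rw [← hlblg, ← hrest]; exact hpc
      exact prefix_lcp hss hvi'
    · rw [List.concat_eq_append] at hρ hrest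
      rw [subtreeAt_append] at hrest
      cases hw2 : subtreeAt (if i then r₀ else l₀) ρ' with
      | none => rw [hw2] at hrest; simp at hrest
      | some w2 =>
        rw [hw2] at hrest
        rw [Option.bind_some] at hrest
        obtain ⟨hvw2, hpw2, -⟩ := subtreeAt_spec hvchild hw2
        cases w2 with
        | leaf s2 => simp [subtreeAt] at hrest
        | node s2 l2 r2 =>
          obtain ⟨f1, f2, -, -⟩ := hvw2
          have hg_is : (if i' then r2 else l2) = g := by
            simpa [subtreeAt] using hrest
          have hs2i : s2 ++ [i'] <+: s := by
            rw [← hlblg, ← hg_is]; cases i' <;> simpa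
          have hsubw2 : subtreeAt t (π₀ ++ [i] ++ ρ') = some (.node s2 l2 r2) := by
            rw [subtreeAt_append, hchild]
            simpa using hw2
          have hvi2 : s2 ++ [i'] <+: vi :=
            hparent (π₀ ++ [i] ++ ρ') i' s2 l2 r2 (by rw [← hρ]; simp) hsubw2
          have hstep : s₀ ++ [i] <+: s2 ++ [i'] :=
            (hpc.trans hpw2).trans (s2.prefix_append [i'])
          exact hstep.trans (prefix_lcp hs2i hvi2)
  -- leaf labels
  have hvd_ns : vd ∉ leafLabels ns := fun hc =>
    prefix_bool_disj b' h3 (h4.trans (lbl_prefix_leaf hvns hc))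
  have hvd_vd : s ++ [b] <+: vd := h1.trans ((s'.prefix_append [b']).trans h3)
  have hvd_ps : vd ∉ leafLabels ps := fun hc =>
    prefix_bool_disj b hvd_vd (h2.trans (lbl_prefix_leaf hvps hc))
  have hLrep := leafLabels_replaceAt hv hsub (join (join ns ps) (.leaf vi))
  refine ⟨claim1, claim2, hlcp1, hvrep, ?_⟩
  rw [hLrep, hLg, hLJ2]
  have hsubT : leafLabels ns ∪ leafLabels ps ∪ {vd} ⊆ leafLabels t := by
    rw [← hLg]; exact hsg
  ext w
  have f1 : w ∈ leafLabels ns → w ∈ leafLabels t := fun h => hsubT (Set.mem_union_left _ (Set.mem_union_left _ h))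
  have f2 : w ∈ leafLabels ps → w ∈ leafLabels t := fun h => hsubT (Set.mem_union_left _ (Set.mem_union_right _ h))
  have f3 : w ∈ leafLabels ns → w ≠ vd := fun h he => hvd_ns (he ▸ h)
  have f4 : w ∈ leafLabels ps → w ≠ vd := fun h he => hvd_ps (he ▸ h)
  simp only [Set.mem_union, Set.mem_diff, Set.mem_singleton_iff]
  constructor
  · rintro (⟨hw, hng⟩ | ((hw | hw) | hw))
    · exact Or.inl ⟨hw, fun he => hng (Or.inr he)⟩
    · exact Or.inl ⟨f1 hw, f3 hw⟩
    · exact Or.inl ⟨f2 hw, f4 hw⟩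
    · exact Or.inr hw
  · rintro (⟨hw, hng⟩ | hw')
    · by_cases hn : w ∈ leafLabels ns
      · exact Or.inr (Or.inl (Or.inl hn))
      · by_cases hp : w ∈ leafLabels ps
        · exact Or.inr (Or.inl (Or.inr hp))
        · refine Or.inl ⟨hw, fun hc => ?_⟩
          rcases hc with (h | h) | h
          · exact hn h
          · exact hp h
          · exact hng h
    · exact Or.inr (Or.inr hw')


/-- Special case 4 of the replace operation. -/
theorem replace_special_case4 (t : PTrie) (ℓ : ℕ) (hv : Valid t)
    (hleaf : ∀ w ∈ leafLabels t, w.length = ℓ)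
    (vi : List Bool) (hvi : vi.length = ℓ)
    (π s s' : List Bool) (g₀ g₁ d₀ d₁ : PTrie) (b b' : Bool) (vd : List Bool)
    (hsub : subtreeAt t π = some (PTrie.node s g₀ g₁))
    (hgb : (if b then g₁ else g₀) = PTrie.node s' d₀ d₁)
    (hdb : (if b' then d₁ else d₀) = PTrie.leaf vd)
    (hnp : ¬ (s <+: vi))
    (hparent : ∀ (π₀ : List Bool) (i : Bool) (s₀ : List Bool) (l₀ r₀ : PTrie),
        π = π₀ ++ [i] → subtreeAt t π₀ = some (PTrie.node s₀ l₀ r₀) →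
        (s₀ ++ [i]) <+: vi) :
    ¬ (lbl (if b' then d₀ else d₁) <+: lbl (if b then g₀ else g₁)) ∧
    ¬ (lbl (if b then g₀ else g₁) <+: lbl (if b' then d₀ else d₁)) ∧
    lcp (lbl (if b' then d₀ else d₁)) (lbl (if b then g₀ else g₁)) = s ∧
    Valid (replaceAt t π
      (join (join (if b' then d₀ else d₁) (if b then g₀ else g₁)) (PTrie.leaf vi))) ∧
    leafLabels (replaceAt t π
      (join (join (if b' then d₀ else d₁) (if b then g₀ else g₁)) (PTrie.leaf vi))) =
      (leafLabels t \ {vd}) ∪ {vi} := by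
  obtain ⟨hvg, hpg, hsg⟩ := subtreeAt_spec hv hsub
  obtain ⟨hg0, hg1, hvg0, hvg1⟩ := hvg
  cases b <;> cases b' <;> simp only [Bool.false_eq_true, ↓reduceIte, if_true, if_false] at hgb hdb ⊢ <;> subst hgb <;> subst hdb
  · obtain ⟨hd0, hd1, hvd0, hvd1⟩ := hvg0
    exact core (b := false) (b' := false) hv hleaf hvi hsub rfl
      (by ext w; simp [leafLabels]; tauto)
      (by simpa [lbl] using hg0) (by simpa [lbl] using hg1) hvg1
      (by simpa [lbl] using hd0) (by simpa [lbl] using hd1) hvd1 hnp hparent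
  · obtain ⟨hd0, hd1, hvd0, hvd1⟩ := hvg0
    exact core (b := false) (b' := true) hv hleaf hvi hsub rfl
      (by ext w; simp [leafLabels]; tauto)
      (by simpa [lbl] using hg0) (by simpa [lbl] using hg1) hvg1
      (by simpa [lbl] using hd1) (by simpa [lbl] using hd0) hvd0 hnp hparent
  · obtain ⟨hd0, hd1, hvd0, hvd1⟩ := hvg1
    exact core (b := true) (b' := false) hv hleaf hvi hsub rfl
      (by ext w; simp [leafLabels]; tauto)
      (by simpa [lbl] using hg1) (by simpa [lbl] using hg0) hvg0
      (by simpa [lbl] using hd0) (by simpa [lbl] using hd1) hvd1 hnp hparent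
  · obtain ⟨hd0, hd1, hvd0, hvd1⟩ := hvg1
    exact core (b := true) (b' := true) hv hleaf hvi hsub rfl
      (by ext w; simp [leafLabels]; tauto)
      (by simpa [lbl] using hg1) (by simpa [lbl] using hg0) hvg0
      (by simpa [lbl] using hd1) (by simpa [lbl] using hd0) hvd0 hnp hparent
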